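/- Moving-knife bound for paths: let G be a path on m vertices, n ≥ 2 agents with additive utilities such that each vertex is positively valued by at most one agent, and let W denote the optimal (unconstrained) egalitarian welfare. Then there exists a partition of the path into n contiguous intervals (some possibly empty) and an assignment of intervals to agents such that every agent's utility for her interval is at least W/n. -/

import Mathlib

def IsAlloc {V : Type*} [Fintype V] [DecidableEq V] {n : ℕ} (A : Fin n → Finset V) : Prop :=
  (∀ i j : Fin n, i ≠ j → Disjoint (A i) (A j)) ∧ Finset.univ.biUnion A = Finset.univ

open Finset

private lemma S_split (m : ℕ) (u : Fin m → ℝ) (a k b : ℕ) (hak : a ≤ k) (hkb : k ≤ b) :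
    ∑ v ∈ Finset.univ.filter (fun v : Fin m => a ≤ v.val ∧ v.val < b), u v =
    (∑ v ∈ Finset.univ.filter (fun v : Fin m => a ≤ v.val ∧ v.val < k), u v) +
    ∑ v ∈ Finset.univ.filter (fun v : Fin m => k ≤ v.val ∧ v.val < b), u v := by
  classical
  simp only [Finset.sum_filter]
  rw [← Finset.sum_add_distrib]
  refine Finset.sum_congr rfl fun v _ => ?_
  split_ifs <;> first | (exfalso; omega) | ring

private lemma S_single (m : ℕ) (u : Fin m → ℝ) (k : ℕ) (hk : k < m) :
    ∑ v ∈ Finset.univ.filter (fun v : Fin m => k ≤ v.val ∧ v.val < k + 1), u v = u ⟨k, hk⟩ := by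
  have : Finset.univ.filter (fun v : Fin m => k ≤ v.val ∧ v.val < k + 1) = {⟨k, hk⟩} := by
    ext v; simp [Fin.ext_iff]; omega
  rw [this, Finset.sum_singleton]

private lemma S_empty (m : ℕ) (u : Fin m → ℝ) (a b : ℕ) (h : b ≤ a) :
    ∑ v ∈ Finset.univ.filter (fun v : Fin m => a ≤ v.val ∧ v.val < b), u v = 0 := by
  have : Finset.univ.filter (fun v : Fin m => a ≤ v.val ∧ v.val < b) = ∅ := by
    ext v; simp; omega
  rw [this, Finset.sum_empty]

private lemma moving_knife_aux : ∀ (n m a : ℕ), a ≤ m → ∀ (u : Fin (n + 1) → Fin m → ℝ),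
    (∀ i v, 0 ≤ u i v) →
    (∀ v : Fin m, ∀ i j : Fin (n + 1), 0 < u i v → 0 < u j v → i = j) →
    ∀ t : ℝ,
    (∀ i, (n + 1 : ℝ) * t ≤
      ∑ v ∈ Finset.univ.filter (fun v : Fin m => a ≤ v.val ∧ v.val < m), u i v) →
    ∃ c : Fin (n + 2) → ℕ, Monotone c ∧ c 0 = a ∧ c (Fin.last (n + 1)) = m ∧
      ∃ σ : Equiv.Perm (Fin (n + 1)), ∀ i,
        t ≤ ∑ v ∈ Finset.univ.filter
          (fun v : Fin m => c (σ i).castSucc ≤ v.val ∧ v.val < c (σ i).succ), u i v := by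
  intro n
  induction n with
  | zero =>
    intro m a ham u hu hone t ht
    refine ⟨![a, m], ?_, rfl, rfl, 1, ?_⟩
    · intro x y hxy
      fin_cases x <;> fin_cases y <;> simp_all <;> omega
    · intro i
      have h0 : i = 0 := Fin.ext (by omega)
      subst h0
      have := ht 0
      simp only [Nat.cast_zero, zero_add, one_mul] at this
      simpa using this
  | succ n IH =>
    intro m a ham u hu hone t ht
    by_cases hts : t ≤ 0
    · -- trivial: all sums nonneg
      refine ⟨fun i => if i = Fin.last (n + 2) then m else a, ?_, ?_, ?_, 1, ?_⟩
      · intro x y hxy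
        dsimp only
        split_ifs with hx hy hy
        · exact le_refl m
        · exact absurd (le_antisymm (Fin.le_last y) (hx ▸ hxy)) hy
        · exact ham
        · exact le_refl a
      · dsimp only
        rw [if_neg (by simp only [Fin.ext_iff, Fin.val_zero, Fin.val_last]; omega)]
      · dsimp only
        rw [if_pos rfl]
      · intro i
        exact le_trans hts (Finset.sum_nonneg fun v _ => hu i v)
    · push_neg at hts
      classical
      -- prefix sums
      set P : Fin (n + 2) → ℕ → ℝ := fun i k =>
        ∑ v ∈ Finset.univ.filter (fun v : Fin m => a ≤ v.val ∧ v.val < k), u i v with hP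
      have hQm : ∃ k, ∃ i, t ≤ P i k := by
        refine ⟨m, 0, ?_⟩
        have := ht 0
        nlinarith [this]
      let k := Nat.find hQm
      obtain ⟨istar, histar⟩ : ∃ i, t ≤ P i k := Nat.find_spec hQm
      have hkm : k ≤ m := by
        refine Nat.find_min' hQm ⟨0, ?_⟩
        have := ht 0
        nlinarith [this]
      have hak : a < k := by
        by_contra h
        push_neg at h
        have : P istar k = 0 := S_empty m (u istar) a k h
        rw [this] at histar; linarith
      have hk1m : k - 1 < m := by omega
      have hprev : ∀ i, P i (k - 1) < t := by
        intro i
        by_contra h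
        push_neg at h
        exact absurd (Nat.find_min' hQm ⟨i, h⟩) (by omega)
      have hstep : ∀ i, P i k = P i (k - 1) + u i ⟨k - 1, hk1m⟩ := by
        intro i
        have h1 : P i k = P i (k - 1) +
            ∑ v ∈ Finset.univ.filter (fun v : Fin m => k - 1 ≤ v.val ∧ v.val < k), u i v :=
          S_split m (u i) a (k - 1) k (by omega) (by omega)
        have h2 : ∑ v ∈ Finset.univ.filter
            (fun v : Fin m => k - 1 ≤ v.val ∧ v.val < k), u i v = u i ⟨k - 1, hk1m⟩ := by
          have := S_single m (u i) (k - 1) hk1m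
          rw [show k - 1 + 1 = k by omega] at this
          exact this
        rw [h1, h2]
      have hupos : 0 < u istar ⟨k - 1, hk1m⟩ := by
        have := hprev istar
        have := hstep istar
        linarith
      have hother : ∀ j, j ≠ istar → P j k < t := by
        intro j hj
        have huj : u j ⟨k - 1, hk1m⟩ = 0 := by
          rcases lt_or_eq_of_le (hu j ⟨k - 1, hk1m⟩) with h | h
          · exact absurd (hone _ _ _ h hupos) hj
          · exact h.symm
        have := hstep j
        rw [huj] at this
        have := hprev j
        linarith [hstep j, hprev j]
      -- recurse on the rest
      set u' : Fin (n + 1) → Fin m → ℝ := fun j v => u (istar.succAbove j) v with hu'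
      have hone' : ∀ v : Fin m, ∀ i j : Fin (n + 1), 0 < u' i v → 0 < u' j v → i = j := by
        intro v i j hi hj
        exact Fin.succAbove_right_injective (hone v _ _ hi hj)
      have ht' : ∀ j, (n + 1 : ℝ) * t ≤
          ∑ v ∈ Finset.univ.filter (fun v : Fin m => k ≤ v.val ∧ v.val < m), u' j v := by
        intro j
        have hsplit := S_split m (u (istar.succAbove j)) a k m (by omega) hkm
        have hlt := hother (istar.succAbove j) (Fin.succAbove_ne istar j)
        have hbig := ht (istar.succAbove j)
        rw [hsplit] at hbig
        have : P (istar.succAbove j) k =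
            ∑ v ∈ Finset.univ.filter (fun v : Fin m => a ≤ v.val ∧ v.val < k),
              u (istar.succAbove j) v := rfl
        push_cast at hbig ⊢
        nlinarith [hlt]
      obtain ⟨c', hmono', hc'0, hc'last, σ', hσ'⟩ :=
        IH m k hkm u' (fun i v => hu _ v) hone' t ht'
      refine ⟨Fin.cases a c', ?_, ?_, ?_, ?_⟩
      · intro x y hxy
        induction x using Fin.cases with
        | zero =>
          induction y using Fin.cases with
          | zero => exact le_refl _
          | succ y =>
            simp only [Fin.cases_zero, Fin.cases_succ]
            calc a ≤ k := le_of_lt hak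
            _ = c' 0 := hc'0.symm
            _ ≤ c' y := hmono' (Fin.zero_le y)
        | succ x =>
          induction y using Fin.cases with
          | zero => exact absurd hxy (by simp [Fin.le_def])
          | succ y =>
            simp only [Fin.cases_succ]
            exact hmono' (by rwa [Fin.succ_le_succ_iff] at hxy)
      · simp
      · show (Fin.cases a c' : Fin (n + 3) → ℕ) (Fin.last (n + 2)) = m
        rw [← Fin.succ_last]
        rw [show (Fin.cases a c' : Fin (n + 3) → ℕ) (Fin.last (n + 1)).succ = c' (Fin.last (n + 1)) from Fin.cases_succ _]
        exact hc'last
      · refine ⟨(finSuccEquiv' istar).trans ((Equiv.optionCongr σ').trans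
          (finSuccEquiv' 0).symm), ?_⟩
        intro i
        by_cases hi : i = istar
        · have hσi : ((finSuccEquiv' istar).trans ((Equiv.optionCongr σ').trans
              (finSuccEquiv' 0).symm)) i = 0 := by
            rw [hi]; simp [finSuccEquiv'_at]
          rw [hσi]
          have h1 : (Fin.cases a c' : Fin (n + 3) → ℕ) (0 : Fin (n + 2)).castSucc = a := by
            rw [show (0 : Fin (n + 2)).castSucc = (0 : Fin (n + 3)) from rfl]
            exact Fin.cases_zero
          have h2 : (Fin.cases a c' : Fin (n + 3) → ℕ) (0 : Fin (n + 2)).succ = k := by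
            rw [show (0 : Fin (n + 2)).succ = Fin.succ 0 from rfl]
            rw [show (Fin.cases a c' : Fin (n + 3) → ℕ) (Fin.succ 0) = c' 0 from Fin.cases_succ _]
            exact hc'0
          rw [h1, h2, hi]
          exact histar
        · obtain ⟨j, hj⟩ := Fin.exists_succAbove_eq hi
          have hσi : ((finSuccEquiv' istar).trans ((Equiv.optionCongr σ').trans
              (finSuccEquiv' 0).symm)) i = (σ' j).succ := by
            rw [← hj]
            simp [finSuccEquiv'_succAbove, Fin.zero_succAbove]
          rw [hσi]
          have h1 : (Fin.cases a c' : Fin (n + 3) → ℕ) ((σ' j).succ).castSucc =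
              c' ((σ' j).castSucc) := by
            rw [← Fin.succ_castSucc]
            exact Fin.cases_succ _
          have h2 : (Fin.cases a c' : Fin (n + 3) → ℕ) ((σ' j).succ).succ =
              c' ((σ' j).succ) := Fin.cases_succ _
          rw [h1, h2, ← hj]
          exact hσ' j

/-- moving knife on a path: vertices are `0,…,m-1` in path order, `n ≥ 2` agents
have additive nonnegative utilities with each vertex positively valued by at most one agent,
and `W` is achieved as the egalitarian welfare of some (unconstrained) allocation.  Then there
exist cut points `0 = c 0 ≤ c 1 ≤ ⋯ ≤ c n = m` and an assignment (permutation) `σ` of the `n`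
contiguous intervals to the agents such that every agent values her interval at least `W/n`. -/
theorem moving_knife_path (m n : ℕ) (hn : 2 ≤ n)
    (u : Fin n → Fin m → ℝ) (hu : ∀ i v, 0 ≤ u i v)
    (hone : ∀ v : Fin m, ∀ i j : Fin n, 0 < u i v → 0 < u j v → i = j)
    (W : ℝ) (A : Fin n → Finset (Fin m)) (hA : IsAlloc A)
    (hW : ∀ i, W ≤ ∑ v ∈ A i, u i v) :
    ∃ c : Fin (n + 1) → ℕ, Monotone c ∧ c 0 = 0 ∧ c (Fin.last n) = m ∧
      ∃ σ : Equiv.Perm (Fin n), ∀ i : Fin n,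
        W / n ≤ ∑ v ∈ Finset.univ.filter
          (fun v : Fin m => c (σ i).castSucc ≤ v.val ∧ v.val < c (σ i).succ), u i v := by
  obtain ⟨p, rfl⟩ : ∃ p, n = p + 1 := ⟨n - 1, by omega⟩
  have ht : ∀ i, (p + 1 : ℝ) * (W / (p + 1 : ℕ)) ≤
      ∑ v ∈ Finset.univ.filter (fun v : Fin m => 0 ≤ v.val ∧ v.val < m), u i v := by
    intro i
    have h1 : W ≤ ∑ v, u i v :=
      le_trans (hW i) (Finset.sum_le_sum_of_subset_of_nonneg (Finset.subset_univ _)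
        (fun v _ _ => hu i v))
    have h2 : Finset.univ.filter (fun v : Fin m => 0 ≤ v.val ∧ v.val < m) = Finset.univ := by
      ext v; simp [v.isLt]
    rw [h2]
    have hp : ((p : ℝ) + 1) ≠ 0 := by positivity
    push_cast
    rw [mul_div_cancel₀ _ hp]
    exact h1
  obtain ⟨c, hm, h0, hl, σ, hσ⟩ :=
    moving_knife_aux p m 0 (Nat.zero_le m) u hu hone (W / (p + 1 : ℕ)) ht
  exact ⟨c, hm, h0, hl, σ, hσ⟩
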